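/- Let ℓ be a norm on ℝ^p invariant under the group W_p of signed permutations of coordinates, and let d(L,M) = ℓ(Ψ[L,M]) be the associated invariant metric on Gr_{p,q}. Then every H-curve is a geodesic for d: if L(s) is an H-curve with invariants 0 ≤ a_1 ≤ … ≤ a_p and s_1 < s_2 < s_3 with a_p(s_3 − s_1) ≤ π/2, then d(L(s_1), L(s_2)) + d(L(s_2), L(s_3)) = d(L(s_1), L(s_3)). -/

import Mathlib

open Module Submodule Real Set
open scoped RealInnerProductSpace

/-- Decreasing rearrangement of a tuple of reals. -/
noncomputable def sortDesc {n : ℕ} (v : Fin n → ℝ) : Fin n → ℝ :=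
  fun i => v (Tuple.sort v i.rev)

/-- The singular values of a real `m × n` matrix, listed in decreasing order:
the square roots of the eigenvalues of `A * Aᵀ`. -/
noncomputable def matSingVals {m n : ℕ} (A : Matrix (Fin m) (Fin n) ℝ) : Fin m → ℝ :=
  sortDesc fun i => Real.sqrt ((Matrix.isHermitian_mul_conjTranspose_self A).eigenvalues i)

/-- `v` is an orthonormal basis of the subspace `L`. -/
def IsONBasisOf {n m : ℕ} (v : Fin m → EuclideanSpace ℝ (Fin n))
    (L : Submodule ℝ (EuclideanSpace ℝ (Fin n))) : Prop :=
  Orthonormal ℝ v ∧ Submodule.span ℝ (Set.range v) = L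

/-- The matrix `⟨e i, f j⟩`. -/
noncomputable def grammian {n m : ℕ} (e f : Fin m → EuclideanSpace ℝ (Fin n)) :
    Matrix (Fin m) (Fin m) ℝ :=
  Matrix.of fun i j => ⟪e i, f j⟫

open Classical in
/-- `λ_1[L,M] ≥ … ≥ λ_p[L,M]`: the singular values of the matrix `⟨e i, f j⟩` formed from
orthonormal bases of `L` and `M` (independent of the choice of bases). -/
noncomputable def subSingVals (p : ℕ) {n : ℕ}
    (L M : Submodule ℝ (EuclideanSpace ℝ (Fin n))) : Fin p → ℝ :=
  if h : (∃ e : Fin p → EuclideanSpace ℝ (Fin n), IsONBasisOf e L) ∧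
         (∃ f : Fin p → EuclideanSpace ℝ (Fin n), IsONBasisOf f M)
  then matSingVals (grammian h.1.choose h.2.choose)
  else 0

/-- The Jordan angles `Ψ_1[L,M] ≤ … ≤ Ψ_p[L,M]`. -/
noncomputable def jordanAngles (p : ℕ) {n : ℕ}
    (L M : Submodule ℝ (EuclideanSpace ℝ (Fin n))) : Fin p → ℝ :=
  fun i => Real.arccos (subSingVals p L M i)

/-- The orbit of a vector under the group `W_p` of signed permutations of the coordinates. -/
def WOrbit {p : ℕ} (v : Fin p → ℝ) : Set (Fin p → ℝ) :=
  {w | ∃ (σ : Equiv.Perm (Fin p)) (ε : Fin p → ℝ),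
    (∀ i, ε i = 1 ∨ ε i = -1) ∧ w = fun i => ε i * v (σ i)}

open scoped Matrix

open Polynomial in
theorem charmatrix_eq' {m : ℕ} (M : Matrix (Fin m) (Fin m) ℝ) :
    Matrix.charmatrix M = Matrix.scalar (Fin m) (X : ℝ[X]) - M.map C := rfl

open Polynomial in
theorem conj_charpoly {m : ℕ} (U B : Matrix (Fin m) (Fin m) ℝ) (hU : U * Uᵀ = 1) :
    (U * B * Uᵀ).charpoly = B.charpoly := by
  have hU' : Uᵀ * U = 1 := mul_eq_one_comm.mp hU
  have hmap : (U.map (C : ℝ → ℝ[X])) * (Uᵀ.map C) = 1 := by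
    rw [← Matrix.map_mul (L := U) (M := Uᵀ) (f := (C : ℝ →+* ℝ[X])), hU]
    simp
  have hmap' : (Uᵀ.map (C : ℝ → ℝ[X])) * (U.map C) = 1 := mul_eq_one_comm.mp hmap
  have key : Matrix.charmatrix (U * B * Uᵀ) =
      (U.map C) * Matrix.charmatrix B * (Uᵀ.map C) := by
    rw [charmatrix_eq', charmatrix_eq']
    rw [Matrix.mul_sub, Matrix.sub_mul]
    congr 1
    · rw [← (Matrix.scalar_commute (X : ℝ[X]) (Commute.all X) (U.map C)).eq, Matrix.mul_assoc,
        hmap, Matrix.mul_one]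
    · rw [← Matrix.map_mul (f := (C : ℝ →+* ℝ[X])), ← Matrix.map_mul (f := (C : ℝ →+* ℝ[X]))]
  unfold Matrix.charpoly
  rw [key, Matrix.det_mul, Matrix.det_mul, mul_comm, ← mul_assoc, ← Matrix.det_mul, hmap']
  simp

open Polynomial in
theorem charpoly_diag {m : ℕ} (d : Fin m → ℝ) :
    (Matrix.diagonal d).charpoly = ∏ i, (X - C (d i)) := by
  rw [Matrix.charpoly_of_upperTriangular _ (Matrix.blockTriangular_diagonal d)]
  simp [Matrix.diagonal_apply_eq]

open Polynomial in
theorem prod_X_sub_C_inj {m : ℕ} (d e : Fin m → ℝ)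
    (h : ∏ i, (X - C (d i)) = ∏ i, (X - C (e i))) :
    Multiset.map d Finset.univ.val = Multiset.map e Finset.univ.val := by
  have hr : ∀ v : Fin m → ℝ,
      (∏ i, (X - C (v i))).roots = Multiset.map v Finset.univ.val := by
    intro v
    rw [Finset.prod_eq_multiset_prod,
      show (Multiset.map (fun i => X - C (v i)) Finset.univ.val)
        = Multiset.map (fun a => X - C a) (Multiset.map v Finset.univ.val) by
          rw [Multiset.map_map]; rfl]
    exact roots_multiset_prod_X_sub_C _
  rw [← hr d, ← hr e, h]

theorem star_eq_transpose' {m : ℕ} (U : Matrix (Fin m) (Fin m) ℝ) : star U = Uᵀ := by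
  simp [Matrix.star_eq_conjTranspose, Matrix.conjTranspose_eq_transpose_of_trivial]

open Polynomial in
/-- The charpoly of a real Hermitian (= symmetric) matrix in terms of eigenvalues. -/
theorem herm_charpoly {m : ℕ} {A : Matrix (Fin m) (Fin m) ℝ} (hA : A.IsHermitian) :
    A.charpoly = ∏ i, (X - C (hA.eigenvalues i)) := by
  have hspec := hA.spectral_theorem
  have hU : (hA.eigenvectorUnitary : Matrix (Fin m) (Fin m) ℝ) *
      (hA.eigenvectorUnitary : Matrix (Fin m) (Fin m) ℝ)ᵀ = 1 := by
    rw [← star_eq_transpose']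
    exact Matrix.mem_unitaryGroup_iff.mp hA.eigenvectorUnitary.2
  have hdiag : Matrix.diagonal (RCLike.ofReal ∘ hA.eigenvalues) =
      Matrix.diagonal hA.eigenvalues := by congr 1
  rw [Unitary.conjStarAlgAut_apply, star_eq_transpose'] at hspec
  have h1 : A.charpoly = ((hA.eigenvectorUnitary : Matrix (Fin m) (Fin m) ℝ) *
      Matrix.diagonal hA.eigenvalues *
      (hA.eigenvectorUnitary : Matrix (Fin m) (Fin m) ℝ)ᵀ).charpoly :=
    congrArg Matrix.charpoly (hspec.trans (by rw [hdiag]))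
  rw [h1, conj_charpoly _ _ hU, charpoly_diag]

theorem herm_eig_multiset {m : ℕ} {A B : Matrix (Fin m) (Fin m) ℝ}
    (hA : A.IsHermitian) (hB : B.IsHermitian) (h : A.charpoly = B.charpoly) :
    Multiset.map hA.eigenvalues Finset.univ.val
      = Multiset.map hB.eigenvalues Finset.univ.val := by
  apply prod_X_sub_C_inj
  rw [← herm_charpoly hA, ← herm_charpoly hB, h]

theorem sortDesc_congr {n : ℕ} {v w : Fin n → ℝ}
    (h : Multiset.map v Finset.univ.val = Multiset.map w Finset.univ.val) :
    sortDesc v = sortDesc w := by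
  have hperm : List.Perm (List.ofFn v) (List.ofFn w) := by
    rw [Fin.univ_val_map, Fin.univ_val_map] at h
    exact Multiset.coe_eq_coe.mp h
  have key : v ∘ Tuple.sort v = w ∘ Tuple.sort w := by
    apply List.ofFn_injective
    refine (fun hp h1 h2 => List.Perm.eq_of_sortedLE h1 h2 hp) ?_ ?_ ?_
    · exact ((Equiv.Perm.ofFn_comp_perm _ v).trans hperm).trans
        (Equiv.Perm.ofFn_comp_perm _ w).symm
    · exact (Tuple.monotone_sort v).sortedLE_ofFn
    · exact (Tuple.monotone_sort w).sortedLE_ofFn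
  funext i
  exact congrFun key i.rev

theorem sortDesc_of_antitone {n : ℕ} {v : Fin n → ℝ} (hv : Antitone v) :
    sortDesc v = v := by
  have hrev : Monotone (v ∘ (Fin.revPerm : Equiv.Perm (Fin n))) := by
    intro i j hij
    exact hv (by simpa [Fin.rev_le_rev] using hij)
  have h := Tuple.unique_monotone (f := v) (σ := Tuple.sort v) (τ := Fin.revPerm)
    (Tuple.monotone_sort v) hrev
  funext i
  have := congrFun h i.rev
  simpa [Fin.rev_rev, sortDesc] using this

theorem coords {n p : ℕ} {v : Fin p → EuclideanSpace ℝ (Fin n)} (hv : Orthonormal ℝ v)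
    {x : EuclideanSpace ℝ (Fin n)} (hx : x ∈ Submodule.span ℝ (Set.range v)) :
    (∑ k, ⟪v k, x⟫ • v k) = x := by
  obtain ⟨c, hc⟩ := (mem_span_range_iff_exists_fun ℝ).mp hx
  rw [← hc]
  congr 1
  funext k
  rw [hv.inner_right_fintype]

theorem grammian_factor {n p : ℕ} {L M : Submodule ℝ (EuclideanSpace ℝ (Fin n))}
    {v w e' f' : Fin p → EuclideanSpace ℝ (Fin n)}
    (hv : IsONBasisOf v L) (hw : IsONBasisOf w M)
    (he : IsONBasisOf e' L) (hf : IsONBasisOf f' M) :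
    ∃ Cm Bm : Matrix (Fin p) (Fin p) ℝ, Cm * Cmᵀ = 1 ∧ Bm * Bmᵀ = 1 ∧
      grammian e' f' = Cm * grammian v w * Bmᵀ := by
  set Cm : Matrix (Fin p) (Fin p) ℝ := Matrix.of fun i k => ⟪v k, e' i⟫ with hCm
  set Bm : Matrix (Fin p) (Fin p) ℝ := Matrix.of fun j l => ⟪w l, f' j⟫ with hBm
  have hce : ∀ i, (∑ k, Cm i k • v k) = e' i := fun i =>
    coords hv.1 (by rw [hv.2, ← he.2]; exact Submodule.subset_span ⟨i, rfl⟩)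
  have hbf : ∀ j, (∑ l, Bm j l • w l) = f' j := fun j =>
    coords hw.1 (by rw [hw.2, ← hf.2]; exact Submodule.subset_span ⟨j, rfl⟩)
  refine ⟨Cm, Bm, ?_, ?_, ?_⟩
  · ext i m
    have h1 : ⟪e' i, e' m⟫ = ∑ k, Cm i k * Cm m k := by
      rw [← hce i, sum_inner]
      congr 1; funext k
      rw [real_inner_smul_left]; rfl
    have h2 := orthonormal_iff_ite.mp he.1 i m
    rw [Matrix.mul_apply]
    simp only [Matrix.transpose_apply, Matrix.one_apply]
    rw [← h1, h2]
  · ext j l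
    have h1 : ⟪f' j, f' l⟫ = ∑ k, Bm j k * Bm l k := by
      rw [← hbf j, sum_inner]
      congr 1; funext k
      rw [real_inner_smul_left]; rfl
    have h2 := orthonormal_iff_ite.mp hf.1 j l
    rw [Matrix.mul_apply]
    simp only [Matrix.transpose_apply, Matrix.one_apply]
    rw [← h1, h2]
  · ext i j
    show ⟪e' i, f' j⟫ = _
    rw [← hce i, ← hbf j, sum_inner]
    simp only [inner_sum, real_inner_smul_left, real_inner_smul_right, Matrix.mul_apply,
      Matrix.transpose_apply, Finset.sum_mul, Finset.mul_sum, grammian, Matrix.of_apply]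
    rw [Finset.sum_comm]
    apply Finset.sum_congr rfl
    intro l _
    apply Finset.sum_congr rfl
    intro k _
    ring

theorem matSingVals_eq' {n p : ℕ} {L M : Submodule ℝ (EuclideanSpace ℝ (Fin n))}
    {v w e' f' : Fin p → EuclideanSpace ℝ (Fin n)}
    (hv : IsONBasisOf v L) (hw : IsONBasisOf w M)
    (he : IsONBasisOf e' L) (hf : IsONBasisOf f' M) :
    matSingVals (grammian e' f') = matSingVals (grammian v w) := by
  obtain ⟨Cm, Bm, hC, hB, hfac⟩ := grammian_factor hv hw he hf
  have hBB : Bmᵀ * Bm = 1 := mul_eq_one_comm.mp hB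
  have hprod : grammian e' f' * (grammian e' f')ᴴ
      = Cm * (grammian v w * (grammian v w)ᴴ) * Cmᵀ := by
    rw [Matrix.conjTranspose_eq_transpose_of_trivial,
      Matrix.conjTranspose_eq_transpose_of_trivial, hfac]
    simp only [Matrix.transpose_mul, Matrix.transpose_transpose, Matrix.mul_assoc]
    rw [← Matrix.mul_assoc Bmᵀ Bm, hBB, Matrix.one_mul]
  unfold matSingVals
  apply sortDesc_congr
  have h1 : Multiset.map
        (Matrix.isHermitian_mul_conjTranspose_self (grammian e' f')).eigenvalues Finset.univ.val
      = Multiset.map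
        (Matrix.isHermitian_mul_conjTranspose_self (grammian v w)).eigenvalues Finset.univ.val := by
    apply herm_eig_multiset
    rw [hprod, conj_charpoly _ _ hC]
  have h2 := congrArg (Multiset.map Real.sqrt) h1
  simpa only [Multiset.map_map, Function.comp_def] using h2

theorem matSingVals_diagonal {p : ℕ} (d : Fin p → ℝ) (hd : ∀ i, 0 ≤ d i) (hmono : Antitone d) :
    matSingVals (Matrix.diagonal d) = d := by
  have hDD : Matrix.diagonal d * (Matrix.diagonal d)ᴴ
      = Matrix.diagonal (fun i => d i * d i) := by
    rw [Matrix.conjTranspose_eq_transpose_of_trivial, Matrix.diagonal_transpose,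
      Matrix.diagonal_mul_diagonal]
  have heig : Multiset.map
        (Matrix.isHermitian_mul_conjTranspose_self (Matrix.diagonal d)).eigenvalues
        Finset.univ.val
      = Multiset.map (fun i => d i * d i) Finset.univ.val := by
    apply prod_X_sub_C_inj
    rw [← herm_charpoly (Matrix.isHermitian_mul_conjTranspose_self (Matrix.diagonal d)),
      ← charpoly_diag]
    exact congrArg Matrix.charpoly hDD
  unfold matSingVals
  have h2 := congrArg (Multiset.map Real.sqrt) heig
  simp only [Multiset.map_map, Function.comp_def] at h2
  rw [sortDesc_congr h2]
  have h3 : (fun i => Real.sqrt (d i * d i)) = d := by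
    funext i
    exact Real.sqrt_mul_self (hd i)
  rw [h3]
  exact sortDesc_of_antitone hmono

theorem jordan_hcurve {p q : ℕ} (a : Fin p → ℝ) (ha0 : ∀ j, 0 ≤ a j) (hamono : Monotone a)
    (e f : Fin p → EuclideanSpace ℝ (Fin (p + q)))
    (horth : Orthonormal ℝ (Sum.elim e f)) (s t : ℝ) (hst : s ≤ t)
    (hub : ∀ i, a i * (t - s) ≤ π / 2) :
    jordanAngles p
      (Submodule.span ℝ
        (Set.range fun j : Fin p => Real.cos (a j * s) • e j + Real.sin (a j * s) • f j))
      (Submodule.span ℝ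
        (Set.range fun j : Fin p => Real.cos (a j * t) • e j + Real.sin (a j * t) • f j))
      = fun i => a i * (t - s) := by
  have hee : ∀ i j : Fin p, ⟪e i, e j⟫ = if i = j then 1 else 0 := fun i j => by
    simpa using orthonormal_iff_ite.mp horth (Sum.inl i) (Sum.inl j)
  have hff : ∀ i j : Fin p, ⟪f i, f j⟫ = if i = j then 1 else 0 := fun i j => by
    simpa using orthonormal_iff_ite.mp horth (Sum.inr i) (Sum.inr j)
  have hef : ∀ i j : Fin p, ⟪e i, f j⟫ = 0 := fun i j => by
    simpa using orthonormal_iff_ite.mp horth (Sum.inl i) (Sum.inr j)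
  have hfe : ∀ i j : Fin p, ⟪f i, e j⟫ = 0 := fun i j => by
    simpa using orthonormal_iff_ite.mp horth (Sum.inr i) (Sum.inl j)
  have hinner : ∀ (s' t' : ℝ) (i j : Fin p),
      ⟪(Real.cos (a i * s') • e i + Real.sin (a i * s') • f i : EuclideanSpace ℝ (Fin (p + q))),
        Real.cos (a j * t') • e j + Real.sin (a j * t') • f j⟫
      = if i = j then Real.cos (a i * (t' - s')) else 0 := by
    intro s' t' i j
    simp only [inner_add_left, inner_add_right, real_inner_smul_left, real_inner_smul_right,
      hee, hff, hef, hfe, mul_zero, add_zero, zero_add]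
    by_cases h : i = j
    · subst h
      simp only [if_true, eq_self_iff_true]
      rw [mul_sub, Real.cos_sub]
      ring
    · simp [h]
  set v := fun j : Fin p => Real.cos (a j * s) • e j + Real.sin (a j * s) • f j with hvdef
  set w := fun j : Fin p => Real.cos (a j * t) • e j + Real.sin (a j * t) • f j with hwdef
  have hvON : Orthonormal ℝ v := by
    rw [orthonormal_iff_ite]
    intro i j
    rw [show ⟪v i, v j⟫ = _ from hinner s s i j]
    by_cases h : i = j <;> simp [h]
  have hwON : Orthonormal ℝ w := by
    rw [orthonormal_iff_ite]
    intro i j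
    rw [show ⟪w i, w j⟫ = _ from hinner t t i j]
    by_cases h : i = j <;> simp [h]
  have hG : grammian v w = Matrix.diagonal fun i => Real.cos (a i * (t - s)) := by
    ext i j
    show ⟪v i, w j⟫ = _
    rw [hinner s t i j, Matrix.diagonal_apply]
  have hvB : IsONBasisOf v (Submodule.span ℝ (Set.range v)) := ⟨hvON, rfl⟩
  have hwB : IsONBasisOf w (Submodule.span ℝ (Set.range w)) := ⟨hwON, rfl⟩
  have hΔ : (0:ℝ) ≤ t - s := by linarith
  have hd0 : ∀ i, 0 ≤ Real.cos (a i * (t - s)) := fun i =>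
    Real.cos_nonneg_of_mem_Icc ⟨by nlinarith [Real.pi_pos, mul_nonneg (ha0 i) hΔ], hub i⟩
  have hdanti : Antitone fun i => Real.cos (a i * (t - s)) := by
    intro i j hij
    exact Real.cos_le_cos_of_nonneg_of_le_pi (mul_nonneg (ha0 i) hΔ)
      ((hub j).trans (by linarith [Real.pi_pos])) (mul_le_mul_of_nonneg_right (hamono hij) hΔ)
  have hex : (∃ e' : Fin p → EuclideanSpace ℝ (Fin (p + q)),
        IsONBasisOf e' (Submodule.span ℝ (Set.range v)))
      ∧ ∃ f' : Fin p → EuclideanSpace ℝ (Fin (p + q)),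
        IsONBasisOf f' (Submodule.span ℝ (Set.range w)) := ⟨⟨v, hvB⟩, ⟨w, hwB⟩⟩
  have hsv : subSingVals p (Submodule.span ℝ (Set.range v)) (Submodule.span ℝ (Set.range w))
      = fun i => Real.cos (a i * (t - s)) := by
    unfold subSingVals
    rw [dif_pos hex]
    rw [matSingVals_eq' hvB hwB hex.1.choose_spec hex.2.choose_spec, hG]
    exact matSingVals_diagonal _ hd0 hdanti
  funext i
  unfold jordanAngles
  rw [hsv]
  exact Real.arccos_cos (mul_nonneg (ha0 i) hΔ)
    ((hub i).trans (by linarith [Real.pi_pos]))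


/-- `H`-curves are geodesics for every invariant metric `d(L,M) = ℓ(Ψ[L,M])` coming from a
`W_p`-invariant norm `ℓ`: along an `H`-curve, for `s₁ < s₂ < s₃` with `a_p (s₃ - s₁) ≤ π/2`,
the distance is additive: `d(L(s₁),L(s₂)) + d(L(s₂),L(s₃)) = d(L(s₁),L(s₃))`. -/
theorem HCurve_is_geodesic (p q : ℕ) (hp : 1 ≤ p) (hpq : p ≤ q)
    (ℓ : (Fin p → ℝ) → ℝ)
    (hℓ_zero : ∀ x, ℓ x = 0 ↔ x = 0)
    (hℓ_smul : ∀ (c : ℝ) (x), ℓ (c • x) = |c| * ℓ x)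
    (hℓ_add : ∀ x y, ℓ (x + y) ≤ ℓ x + ℓ y)
    (hℓ_inv : ∀ (σ : Equiv.Perm (Fin p)) (ε : Fin p → ℝ), (∀ i, ε i = 1 ∨ ε i = -1) →
      ∀ x, ℓ (fun i => ε i * x (σ i)) = ℓ x)
    (a : Fin p → ℝ) (ha0 : ∀ j, 0 ≤ a j) (hamono : Monotone a)
    (e f : Fin p → EuclideanSpace ℝ (Fin (p + q)))
    (horth : Orthonormal ℝ (Sum.elim e f))
    (Lc : ℝ → Submodule ℝ (EuclideanSpace ℝ (Fin (p + q))))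
    (hLc : Lc = fun s => Submodule.span ℝ
      (Set.range fun j : Fin p => Real.cos (a j * s) • e j + Real.sin (a j * s) • f j))
    (s₁ s₂ s₃ : ℝ) (h12 : s₁ < s₂) (h23 : s₂ < s₃)
    (hnear : a ⟨p - 1, by omega⟩ * (s₃ - s₁) ≤ π / 2) :
    ℓ (jordanAngles p (Lc s₁) (Lc s₂)) + ℓ (jordanAngles p (Lc s₂) (Lc s₃)) =
      ℓ (jordanAngles p (Lc s₁) (Lc s₃)) := by
  have hlast : ∀ i : Fin p, a i ≤ a ⟨p - 1, by omega⟩ := fun i => by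
    apply hamono
    rw [Fin.le_def]
    have := i.isLt
    simp only []
    omega
  have hub : ∀ x y : ℝ, 0 ≤ y - x → y - x ≤ s₃ - s₁ → ∀ i, a i * (y - x) ≤ π / 2 := by
    intro x y h0 hle i
    calc a i * (y - x) ≤ a ⟨p - 1, by omega⟩ * (s₃ - s₁) :=
          mul_le_mul (hlast i) hle h0 (ha0 _)
      _ ≤ π / 2 := hnear
  have hJ : ∀ x y : ℝ, x ≤ y → y - x ≤ s₃ - s₁ → jordanAngles p (Lc x) (Lc y) = (y - x) • a := by
    intro x y hxy hle
    rw [hLc]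
    rw [jordan_hcurve a ha0 hamono e f horth x y hxy (hub x y (by linarith) hle)]
    funext i
    simp [mul_comm]
  rw [hJ s₁ s₂ (by linarith) (by linarith), hJ s₂ s₃ (by linarith) (by linarith),
    hJ s₁ s₃ (by linarith) (by linarith)]
  rw [hℓ_smul, hℓ_smul, hℓ_smul, abs_of_nonneg (by linarith : (0:ℝ) ≤ s₂ - s₁),
    abs_of_nonneg (by linarith : (0:ℝ) ≤ s₃ - s₂), abs_of_nonneg (by linarith : (0:ℝ) ≤ s₃ - s₁)]
  ring
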